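/- Let F ∈ ℝ^{K×N} be entrywise nonnegative with every column summing to 1, rank(F) = K, and F satisfying the SSC. Let Q ∈ ℝ^{K×K} be invertible, not a permutation matrix, and such that Q·F is entrywise nonnegative with every column summing to 1. Then det((Q·F)·(Q·F)^T) < det(F·F^T). -/

import Mathlib

open Matrix BigOperators

/-- Euclidean norm of a real vector. -/
noncomputable def l2norm {m : Type*} [Fintype m] (x : m → ℝ) : ℝ :=
  Real.sqrt (∑ i, (x i) ^ 2)

/-- `P` is a permutation matrix. -/
def IsPermMatrix {K : ℕ} (P : Matrix (Fin K) (Fin K) ℝ) : Prop :=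
  ∃ σ : Equiv.Perm (Fin K), ∀ i j, P i j = if σ i = j then 1 else 0

/-- The conic hull of the columns of `H`. -/
def coneOf {K : ℕ} {J : Type*} [Fintype J] (H : Matrix (Fin K) J ℝ) : Set (Fin K → ℝ) :=
  {x | ∃ θ : J → ℝ, (∀ j, 0 ≤ θ j) ∧ x = H.mulVec θ}

/-- The second-order cone `C = {x : √(K-1) ‖x‖₂ ≤ ∑ᵢ xᵢ}`. -/
def socC (K : ℕ) : Set (Fin K → ℝ) :=
  {x | Real.sqrt ((K : ℝ) - 1) * l2norm x ≤ ∑ i, x i}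

/-- The sufficiently scattered condition. -/
def SSC {K : ℕ} {J : Type*} [Fintype J] (H : Matrix (Fin K) J ℝ) : Prop :=
  socC K ⊆ coneOf H ∧
  ∀ Q : Matrix (Fin K) (Fin K) ℝ, Qᵀ * Q = 1 → ¬ IsPermMatrix Q → ¬ (coneOf H ⊆ coneOf Q)

lemma amgm_le_one {K : ℕ} (a : Fin K → ℝ) (ha : ∀ i, 0 < a i) (hsum : ∑ i, a i ≤ K) :
    ∏ i, a i ≤ 1 := by
  have h1 : Real.log (∏ i, a i) = ∑ i, Real.log (a i) :=
    Real.log_prod (fun i _ => (ha i).ne')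
  have h2 : ∑ i, Real.log (a i) ≤ ∑ i, (a i - 1) :=
    Finset.sum_le_sum fun i _ => Real.log_le_sub_one_of_pos (ha i)
  have h3 : ∑ i, (a i - 1) = (∑ i, a i) - K := by
    rw [Finset.sum_sub_distrib]; simp
  have h4 : Real.log (∏ i, a i) ≤ 0 := by rw [h1]; rw [h3] at h2; linarith
  have h5 : (0:ℝ) < ∏ i, a i := Finset.prod_pos fun i _ => ha i
  calc ∏ i, a i = Real.exp (Real.log (∏ i, a i)) := (Real.exp_log h5).symm
    _ ≤ Real.exp 0 := Real.exp_le_exp.mpr h4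
    _ = 1 := Real.exp_zero

lemma amgm_eq_one {K : ℕ} (a : Fin K → ℝ) (ha : ∀ i, 0 < a i) (hsum : ∑ i, a i ≤ K)
    (hprod : 1 ≤ ∏ i, a i) : ∀ i, a i = 1 := by
  have h1 : Real.log (∏ i, a i) = ∑ i, Real.log (a i) :=
    Real.log_prod (fun i _ => (ha i).ne')
  have h2 : 0 ≤ ∑ i, Real.log (a i) := h1 ▸ Real.log_nonneg hprod
  have h3 : ∑ i, (a i - 1) ≤ 0 := by
    rw [Finset.sum_sub_distrib]; simp; linarith
  have h4 : ∀ i ∈ Finset.univ, Real.log (a i) ≤ a i - 1 :=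
    fun i _ => Real.log_le_sub_one_of_pos (ha i)
  have h5 : ∑ i, Real.log (a i) = ∑ i, (a i - 1) :=
    le_antisymm (Finset.sum_le_sum h4) (by linarith)
  have h6 := (Finset.sum_eq_sum_iff_of_le h4).mp h5
  intro i
  by_contra hne
  exact absurd (h6 i (Finset.mem_univ i))
    (ne_of_lt (Real.log_lt_sub_one_of_pos (ha i) hne))

lemma socC_dual {K : ℕ} (hK : 0 < K) (q : Fin K → ℝ)
    (h : ∀ x ∈ socC K, 0 ≤ ∑ i, q i * x i) :
    Real.sqrt (∑ i, q i ^ 2) ≤ ∑ i, q i := by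
  have hc1 : (1:ℝ) ≤ (K:ℝ) := by exact_mod_cast hK
  have hcpos : (0:ℝ) < (K:ℝ) := by linarith
  set s := ∑ i, q i with hs
  set nn := ∑ i, q i ^ 2 with hnn
  have hnn0 : 0 ≤ nn := Finset.sum_nonneg fun i _ => sq_nonneg _
  have hone : (fun _ : Fin K => (1:ℝ)) ∈ socC K := by
    simp only [socC, Set.mem_setOf_eq, l2norm, one_pow, Finset.sum_const, Finset.card_univ,
      Fintype.card_fin, nsmul_eq_mul, mul_one]
    rw [← Real.sqrt_mul (by linarith) (K:ℝ)]
    calc Real.sqrt (((K:ℝ) - 1) * K) ≤ Real.sqrt ((K:ℝ) * K) := by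
          apply Real.sqrt_le_sqrt; nlinarith
      _ = K := by rw [Real.sqrt_mul_self hcpos.le]
  have hs0 : 0 ≤ s := by simpa using h _ hone
  have hcs : s ^ 2 ≤ (K:ℝ) * nn := by
    have := sq_sum_le_card_mul_sum_sq (s := (Finset.univ : Finset (Fin K))) (f := q)
    simpa using this
  set m := (K:ℝ) * nn - s ^ 2 with hm
  have hm0 : 0 ≤ m := by simp only [hm]; linarith
  set d := Real.sqrt (((K:ℝ) - 1) * m) with hd
  have hd0 : 0 ≤ d := Real.sqrt_nonneg _
  have hd2 : d ^ 2 = ((K:ℝ) - 1) * m := Real.sq_sqrt (by nlinarith)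
  set x : Fin K → ℝ := fun i => (s + d) - (K:ℝ) * q i with hx
  have hxsum : ∑ i, x i = (K:ℝ) * d := by
    simp only [hx, Finset.sum_sub_distrib, Finset.sum_const, Finset.card_univ, Fintype.card_fin,
      nsmul_eq_mul, ← Finset.mul_sum, ← hs]
    ring
  have hxsq : ∑ i, x i ^ 2
      = (K:ℝ) * (s + d) ^ 2 - (2 * (s + d) * (K:ℝ)) * s + (K:ℝ) ^ 2 * nn := by
    have h7 : ∀ i : Fin K, x i ^ 2
        = (s + d) ^ 2 - (2 * (s + d) * (K:ℝ)) * q i + (K:ℝ) ^ 2 * q i ^ 2 := by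
      intro i; simp only [hx]; ring
    rw [Finset.sum_congr rfl fun i _ => h7 i, Finset.sum_add_distrib, Finset.sum_sub_distrib,
      ← Finset.mul_sum, ← Finset.mul_sum, ← hnn, ← hs]
    simp only [Finset.sum_const, Finset.card_univ, Fintype.card_fin, nsmul_eq_mul]
  have hkey : ((K:ℝ) - 1) * (∑ i, x i ^ 2) = ((K:ℝ) * d) ^ 2 := by
    rw [hxsq]
    linear_combination (-(K:ℝ)) * hd2 - (K:ℝ) * ((K:ℝ) - 1) * hm
  have hxmem : x ∈ socC K := by
    simp only [socC, Set.mem_setOf_eq, l2norm, hxsum]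
    rw [← Real.sqrt_mul (by linarith), hkey, Real.sqrt_sq (by positivity)]
  have hqx := h x hxmem
  have heq : ∑ i, q i * x i = s * (s + d) - (K:ℝ) * nn := by
    have h8 : ∀ i : Fin K, q i * x i = q i * (s + d) - (K:ℝ) * q i ^ 2 := by
      intro i; simp only [hx]; ring
    rw [Finset.sum_congr rfl fun i _ => h8 i, Finset.sum_sub_distrib, ← Finset.sum_mul,
      ← Finset.mul_sum, ← hs, ← hnn]
  rw [heq] at hqx
  have hmsd : m ≤ s * d := by simp only [hm]; nlinarith
  have hnns : nn ≤ s ^ 2 := by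
    rcases eq_or_lt_of_le hm0 with hmz | hmp
    · have h9 : (K:ℝ) * nn = s ^ 2 := by
        have := hmz.symm; simp only [hm] at this; linarith
      nlinarith
    · have h4 : m * m ≤ (s * d) * (s * d) := mul_self_le_mul_self hm0 hmsd
      have h5 : (s * d) * (s * d) = s ^ 2 * (((K:ℝ) - 1) * m) := by rw [← hd2]; ring
      have h6 : m ≤ s ^ 2 * ((K:ℝ) - 1) := by nlinarith
      have h10 : (K:ℝ) * nn - s ^ 2 ≤ s ^ 2 * ((K:ℝ) - 1) := by
        simp only [hm] at h6; linarith
      nlinarith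
  calc Real.sqrt nn ≤ Real.sqrt (s ^ 2) := Real.sqrt_le_sqrt hnns
    _ = s := Real.sqrt_sq hs0

theorem stmt10 {K N : ℕ}
    (F : Matrix (Fin K) (Fin N) ℝ)
    (hF0 : ∀ k n, 0 ≤ F k n) (hF1 : ∀ n, ∑ k, F k n = 1)
    (hFrank : F.rank = K) (hFssc : SSC F)
    (Q : Matrix (Fin K) (Fin K) ℝ) (hQinv : Q.det ≠ 0) (hQnp : ¬ IsPermMatrix Q)
    (hQF0 : ∀ k n, 0 ≤ (Q * F) k n) (hQF1 : ∀ n, ∑ k, (Q * F) k n = 1) :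
    ((Q * F) * (Q * F)ᵀ).det < (F * Fᵀ).det := by
  -- K is positive
  have hK : 0 < K := by
    rcases Nat.eq_zero_or_pos K with h | h
    · exfalso; apply hQnp; subst h; exact ⟨Equiv.refl _, fun i => i.elim0⟩
    · exact h
  -- injectivity of Fᵀ.mulVec
  have hinj : ∀ v : Fin K → ℝ, Fᵀ.mulVec v = 0 → v = 0 := by
    intro v hv
    have hrank : Fᵀ.rank = K := by rw [Matrix.rank_transpose]; exact hFrank
    have hdef : Fᵀ.rank = Module.finrank ℝ (LinearMap.range Fᵀ.mulVecLin) := rfl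
    have h2 := LinearMap.finrank_range_add_finrank_ker (Fᵀ.mulVecLin)
    rw [← hdef, hrank, Module.finrank_fin_fun] at h2
    have h3 : Module.finrank ℝ (LinearMap.ker Fᵀ.mulVecLin) = 0 := by omega
    have h4 : LinearMap.ker Fᵀ.mulVecLin = ⊥ := Submodule.finrank_eq_zero.mp h3
    have h5 : v ∈ LinearMap.ker Fᵀ.mulVecLin := by
      rw [LinearMap.mem_ker, Matrix.mulVecLin_apply]
      exact hv
    rw [h4] at h5
    simpa using h5
  -- F * Fᵀ is positive definite
  have hpd : (F * Fᵀ).PosDef := by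
    rw [Matrix.posDef_iff_dotProduct_mulVec]
    constructor
    · ext i j
      simp only [Matrix.conjTranspose_apply, Matrix.mul_apply, Matrix.transpose_apply, star_sum,
        star_mul', star_trivial]
      exact Finset.sum_congr rfl fun k _ => mul_comm _ _
    · intro x hx
      have hy : Fᵀ.mulVec x ≠ 0 := fun h => hx (hinj x h)
      have hcalc : star x ⬝ᵥ (F * Fᵀ).mulVec x = (Fᵀ.mulVec x) ⬝ᵥ (Fᵀ.mulVec x) := by
        rw [star_trivial, ← Matrix.mulVec_mulVec, Matrix.dotProduct_mulVec,
          Matrix.mulVec_transpose]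
      rw [hcalc]
      have h6 : (0:ℝ) ≤ (Fᵀ.mulVec x) ⬝ᵥ (Fᵀ.mulVec x) :=
        Finset.sum_nonneg fun i _ => mul_self_nonneg _
      rcases h6.lt_or_eq with h | h
      · exact h
      · exfalso; exact hy ((dotProduct_self_eq_zero).mp h.symm)
  have hD : 0 < (F * Fᵀ).det := hpd.det_pos
  -- determinant factorization
  have hdet : ((Q * F) * (Q * F)ᵀ).det = Q.det ^ 2 * (F * Fᵀ).det := by
    have hmm : (Q * F) * (Q * F)ᵀ = Q * ((F * Fᵀ) * Qᵀ) := by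
      rw [Matrix.transpose_mul, Matrix.mul_assoc, Matrix.mul_assoc]
    rw [hmm, Matrix.det_mul, Matrix.det_mul, Matrix.det_transpose]
    ring
  rw [hdet]
  -- suffices: det Q ^ 2 < 1
  suffices hlt : Q.det ^ 2 < 1 by nlinarith
  by_contra hge
  push_neg at hge
  -- column sums of Q are 1
  have hcol : ∀ j, ∑ i, Q i j = 1 := by
    have hv : Fᵀ.mulVec (fun i => (∑ k, Q k i) - 1) = 0 := by
      funext n
      simp only [Matrix.mulVec, dotProduct, Matrix.transpose_apply, Pi.zero_apply]
      have h1 := hQF1 n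
      simp only [Matrix.mul_apply] at h1
      rw [Finset.sum_comm] at h1
      have h1' : ∑ i, (∑ k, Q k i) * F i n = 1 := by
        rw [← h1]
        exact Finset.sum_congr rfl fun i _ => by rw [Finset.sum_mul]
      have h2 := hF1 n
      have h3 : ∑ i, F i n * ((∑ k, Q k i) - 1)
          = (∑ i, (∑ k, Q k i) * F i n) - ∑ i, F i n := by
        rw [← Finset.sum_sub_distrib]
        exact Finset.sum_congr rfl fun i _ => by ring
      rw [h3, h1', h2]
      ring
    intro j
    have := congrFun (hinj _ hv) j
    simp only [Pi.zero_apply] at this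
    linarith
  -- row sums
  set r : Fin K → ℝ := fun i => ∑ j, Q i j with hr
  have hrsum : ∑ i, r i = K := by
    simp only [hr]
    rw [Finset.sum_comm (f := fun i j => Q i j)]
    simp [hcol]
  -- rows of Q are in the dual cone
  have hrow : ∀ i, Real.sqrt (∑ j, Q i j ^ 2) ≤ r i := by
    intro i
    apply socC_dual hK
    intro x hx
    obtain ⟨θ, hθ, hxe⟩ := hFssc.1 hx
    have heq2 : ∑ j, Q i j * x j = ∑ n, (Q * F) i n * θ n := by
      rw [hxe]
      simp only [Matrix.mulVec, dotProduct, Matrix.mul_apply, Finset.mul_sum,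
        Finset.sum_mul]
      rw [Finset.sum_comm]
      exact Finset.sum_congr rfl fun n _ => Finset.sum_congr rfl fun j _ => by ring
    rw [heq2]
    exact Finset.sum_nonneg fun n _ => mul_nonneg (hQF0 i n) (hθ n)
  have hr0 : ∀ i, 0 < r i := by
    intro i
    rcases lt_or_ge 0 (r i) with h | h
    · exact h
    exfalso
    have h1 : Real.sqrt (∑ j, Q i j ^ 2) ≤ 0 := le_trans (hrow i) h
    have h2 : ∑ j, Q i j ^ 2 ≤ 0 := by
      by_contra h3
      push_neg at h3
      exact absurd (Real.sqrt_pos.mpr h3) (not_lt.mpr h1)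
    have h4 : ∀ j, Q i j = 0 := by
      intro j
      have h5 : ∑ j, Q i j ^ 2 = 0 :=
        le_antisymm h2 (Finset.sum_nonneg fun j _ => sq_nonneg _)
      have h6 := (Finset.sum_eq_zero_iff_of_nonneg
        (fun j _ => sq_nonneg (Q i j))).mp h5 j (Finset.mem_univ j)
      exact (pow_eq_zero_iff two_ne_zero).mp h6
    exact hQinv (Matrix.det_eq_zero_of_row_eq_zero i h4)
  have hQn : ∀ i, ∑ j, Q i j ^ 2 ≤ r i ^ 2 := by
    intro i
    nlinarith [hrow i, Real.sq_sqrt (Finset.sum_nonneg fun j (_ : j ∈ Finset.univ) =>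
      sq_nonneg (Q i j)), Real.sqrt_nonneg (∑ j, Q i j ^ 2)]
  -- product of row sums ≤ 1
  have hprodr : ∏ i, r i ≤ 1 := amgm_le_one r hr0 (le_of_eq hrsum)
  have hprodrpos : 0 < ∏ i, r i := Finset.prod_pos fun i _ => hr0 i
  -- normalized matrix
  set Q' := (Matrix.diagonal fun i => (r i)⁻¹) * Q with hQ'
  set M := Q' * Q'ᵀ with hM
  have hMsym : M.IsHermitian := by
    unfold Matrix.IsHermitian
    ext i j
    simp only [hM, Matrix.conjTranspose_apply, Matrix.mul_apply, Matrix.transpose_apply,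
      star_sum, star_mul', star_trivial]
    exact Finset.sum_congr rfl fun k _ => mul_comm _ _
  have hMpsd : M.PosSemidef := by
    rw [Matrix.posSemidef_iff_dotProduct_mulVec]
    constructor
    · exact hMsym
    · intro x
      have hcalc : star x ⬝ᵥ M.mulVec x = (Q'ᵀ.mulVec x) ⬝ᵥ (Q'ᵀ.mulVec x) := by
        rw [star_trivial, hM, ← Matrix.mulVec_mulVec, Matrix.dotProduct_mulVec,
          Matrix.mulVec_transpose]
      rw [hcalc]
      exact Finset.sum_nonneg fun i _ => mul_self_nonneg _
  -- trace bound
  have hQ'app : ∀ i j, Q' i j = (r i)⁻¹ * Q i j := by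
    intro i j; simp [hQ', Matrix.diagonal_mul]
  have hMii : ∀ i, M i i = ((r i)⁻¹) ^ 2 * ∑ j, Q i j ^ 2 := by
    intro i
    simp only [hM, Matrix.mul_apply, Matrix.transpose_apply, hQ'app, Finset.mul_sum]
    exact Finset.sum_congr rfl fun j _ => by ring
  have htr : M.trace ≤ K := by
    have h1 : ∀ i, M i i ≤ 1 := by
      intro i
      rw [hMii i]
      calc ((r i)⁻¹) ^ 2 * ∑ j, Q i j ^ 2 ≤ ((r i)⁻¹) ^ 2 * (r i) ^ 2 :=
            mul_le_mul_of_nonneg_left (hQn i) (by positivity)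
        _ = 1 := by rw [← mul_pow, inv_mul_cancel₀ (hr0 i).ne', one_pow]
    calc M.trace = ∑ i, M i i := rfl
      _ ≤ ∑ _i : Fin K, (1:ℝ) := Finset.sum_le_sum fun i _ => h1 i
      _ = K := by simp
  -- eigenvalues
  have heig_nonneg : ∀ i, 0 ≤ hMsym.eigenvalues i := fun i => hMpsd.eigenvalues_nonneg i
  have htr_eig : ∑ i, hMsym.eigenvalues i = M.trace := by
    conv_rhs => rw [hMsym.spectral_theorem, Unitary.conjStarAlgAut_apply]
    rw [Matrix.trace_mul_cycle]
    rw [show (star (hMsym.eigenvectorUnitary : Matrix (Fin K) (Fin K) ℝ)) *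
        (hMsym.eigenvectorUnitary : Matrix (Fin K) (Fin K) ℝ) = 1 from
      Unitary.coe_star_mul_self hMsym.eigenvectorUnitary]
    rw [Matrix.one_mul, Matrix.trace_diagonal]
    simp [RCLike.ofReal_real_eq_id]
  have hdet_eig : ∏ i, hMsym.eigenvalues i = M.det := by
    rw [hMsym.det_eq_prod_eigenvalues]
    simp [RCLike.ofReal_real_eq_id]
  -- determinant of M
  have hdetQ' : Q'.det = (∏ i, r i)⁻¹ * Q.det := by
    simp [hQ', Matrix.det_mul, Matrix.det_diagonal, ← Finset.prod_inv_distrib]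
  have hdetM : M.det = ((∏ i, r i)⁻¹ * Q.det) ^ 2 := by
    rw [hM, Matrix.det_mul, Matrix.det_transpose, hdetQ', sq]
  have hdetM1 : 1 ≤ M.det := by
    rw [hdetM]
    have hPinv : 1 ≤ (∏ i, r i)⁻¹ := by
      rw [le_inv_comm₀ one_pos hprodrpos]
      simpa using hprodr
    have h1 : 1 ≤ ((∏ i, r i)⁻¹) ^ 2 := by nlinarith
    calc (1:ℝ) ≤ ((∏ i, r i)⁻¹) ^ 2 * Q.det ^ 2 := by nlinarith
      _ = ((∏ i, r i)⁻¹ * Q.det) ^ 2 := by ring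
  -- all eigenvalues equal 1
  have heig_pos : ∀ i, 0 < hMsym.eigenvalues i := by
    intro i
    rcases (heig_nonneg i).lt_or_eq with h | h
    · exact h
    · exfalso
      have : ∏ i, hMsym.eigenvalues i = 0 :=
        Finset.prod_eq_zero (Finset.mem_univ i) h.symm
      rw [hdet_eig] at this
      linarith [hdetM1]
  have heig1 : ∀ i, hMsym.eigenvalues i = 1 :=
    amgm_eq_one _ heig_pos (le_trans (le_of_eq htr_eig) htr) (le_trans hdetM1 (le_of_eq hdet_eig.symm))
  -- M = 1
  have hdiag1 : Matrix.diagonal (RCLike.ofReal ∘ hMsym.eigenvalues)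
      = (1 : Matrix (Fin K) (Fin K) ℝ) := by
    have heq3 : (RCLike.ofReal ∘ hMsym.eigenvalues) = fun _ : Fin K => (1:ℝ) := by
      funext i
      simp [heig1 i, RCLike.ofReal_real_eq_id]
    rw [heq3, Matrix.diagonal_one]
  have hM1 : M = 1 := by
    rw [hMsym.spectral_theorem, Unitary.conjStarAlgAut_apply, hdiag1, Matrix.mul_one]
    exact Unitary.coe_mul_star_self hMsym.eigenvectorUnitary
  -- deduce ∏ r = 1
  have hdetM1' : M.det = 1 := by rw [hM1]; simp
  have hprodr1 : ∏ i, r i = 1 := by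
    have hPne : (∏ i, r i) ≠ 0 := hprodrpos.ne'
    have h1 : ((∏ i, r i)⁻¹) ^ 2 * Q.det ^ 2 = 1 := by
      rw [← mul_pow, ← hdetM, hdetM1']
    have h2 : Q.det ^ 2 = (∏ i, r i) ^ 2 := by
      field_simp at h1
      linarith [h1]
    refine le_antisymm hprodr ?_
    nlinarith [mul_le_mul_of_nonneg_left hprodr hprodrpos.le]
  have hr1 : ∀ i, r i = 1 :=
    amgm_eq_one r hr0 (le_of_eq hrsum) (le_of_eq hprodr1.symm)
  -- hence Q * Qᵀ = 1
  have hQ'Q : Q' = Q := by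
    ext i j
    rw [hQ'app, hr1 i]
    simp
  have hQQt : Q * Qᵀ = 1 := by rw [← hQ'Q, ← hM, hM1]
  have hQtQ : Qᵀ * Q = 1 := mul_eq_one_comm.mp hQQt
  -- SSC contradiction
  have hQtorth : (Qᵀ)ᵀ * Qᵀ = 1 := by rw [Matrix.transpose_transpose]; exact hQQt
  have hQtnp : ¬ IsPermMatrix Qᵀ := by
    rintro ⟨σ, hσ⟩
    apply hQnp
    refine ⟨σ⁻¹, fun i j => ?_⟩
    have h1 := hσ j i
    rw [Matrix.transpose_apply] at h1
    rw [h1]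
    congr 1
    simp only [eq_iff_iff]
    constructor
    · intro h2; rw [← h2]; simp
    · intro h2; rw [← h2]; simp
  apply hFssc.2 Qᵀ hQtorth hQtnp
  intro x hx
  obtain ⟨θ, hθ, hxe⟩ := hx
  refine ⟨Q.mulVec x, ?_, ?_⟩
  · intro j
    rw [hxe, Matrix.mulVec_mulVec]
    have : ((Q * F).mulVec θ) j = ∑ n, (Q * F) j n * θ n := rfl
    rw [this]
    exact Finset.sum_nonneg fun n _ => mul_nonneg (hQF0 j n) (hθ n)
  · rw [Matrix.mulVec_mulVec, hQtQ, Matrix.one_mulVec]
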